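/- Let X be a finite set, P a stochastic matrix on X (entries ≥ 0, rows summing to 1) with a single recurrent class, and π an invariant distribution of P (π ≥ 0, Σ_x π(x) = 1, πP = π). Let Y be a finite set with |Y| > 1 and g : X → Y any map. For n ≥ 1 define the distribution p_n on Y^n by p_n(y_1,…,y_n) = Σ_{x_1 ∈ g^{-1}(y_1), …, x_n ∈ g^{-1}(y_n)} π(x_1) ∏_{ℓ=2}^{n} P(x_{ℓ-1}, x_ℓ). Fix k ≥ 1 and let Q be the k-th order Markov transition matrix on Y with Q(w,z) = p_{k+1}(w,z)/p_k(w) if p_k(w) > 0, and Q(w,z) = 1/|Y| otherwise. Then Q has a UNIQUE invariant distribution μ on Y^k, and μ = p_k, i.e., μ(y_1,…,y_k) = Σ_{x_1 ∈ g^{-1}(y_1), …, x_k ∈ g^{-1}(y_k)} π(x_1) ∏_{ℓ=2}^{k} P(x_{ℓ-1}, x_ℓ). -/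

import Mathlib

open Finset
open scoped Classical

noncomputable section

/-- The first `k` coordinates of a length-`k+1` tuple. -/
def front {Z : Type*} {k : ℕ} (v : Fin (k + 1) → Z) : Fin k → Z :=
  fun i => v i.castSucc

/-- The last `k` coordinates of a length-`k+1` tuple. -/
def back {Z : Type*} {k : ℕ} (v : Fin (k + 1) → Z) : Fin k → Z :=
  fun i => v i.succ

/-- `p` is a probability distribution on the finite type `α`. -/
def IsProbDist {α : Type*} [Fintype α] (p : α → ℝ) : Prop :=
  (∀ a, 0 ≤ p a) ∧ ∑ a, p a = 1

/-- `Q` is a `k`-th order Markov transition matrix on `Z`. -/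
def IsTransMat {Z : Type*} [Fintype Z] {k : ℕ} (Q : (Fin k → Z) → Z → ℝ) : Prop :=
  (∀ w z, 0 ≤ Q w z) ∧ ∀ w, ∑ z, Q w z = 1

/-- `μ` is an invariant (probability) distribution for the `k`-th order transition matrix `Q`:
`μ(z₁,…,z_k) = ∑_{z₀} μ(z₀,…,z_{k-1}) Q((z₀,…,z_{k-1}), z_k)`. -/
def IsInvariantFor {Z : Type*} [Fintype Z] {k : ℕ} (μ : (Fin k → Z) → ℝ)
    (Q : (Fin k → Z) → Z → ℝ) : Prop :=
  IsProbDist μ ∧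
    ∀ w : Fin k → Z,
      μ w = ∑ z0 : Z,
        μ (front (Fin.cons z0 w)) *
          Q (front (Fin.cons z0 w)) ((Fin.cons z0 w : Fin (k + 1) → Z) (Fin.last k))

/-- `P` is a (first-order) stochastic matrix. -/
def IsStochastic {S : Type*} [Fintype S] (P : Matrix S S ℝ) : Prop :=
  (∀ i j, 0 ≤ P i j) ∧ ∀ i, ∑ j, P i j = 1

/-- State `j` is accessible from state `i` under the stochastic matrix `P`. -/
def Accessible {S : Type*} [Fintype S] (P : Matrix S S ℝ) (i j : S) : Prop :=
  ∃ n : ℕ, 1 ≤ n ∧ 0 < (P ^ n) i j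

/-- State `i` is recurrent for the stochastic matrix `P`. -/
def Recurrent {S : Type*} [Fintype S] (P : Matrix S S ℝ) (i : S) : Prop :=
  ∀ j, Accessible P i j → Accessible P j i

/-- `P` has a single recurrent class. -/
def SingleRecurrentClass {S : Type*} [Fintype S] (P : Matrix S S ℝ) : Prop :=
  (∃ i, Recurrent P i) ∧ ∀ i j, Recurrent P i → Recurrent P j → Accessible P i j

/-- The Doob lift of a `k`-th order transition matrix `Q` on `Z` to a first-order
stochastic matrix on `Z^k`. -/
def doobLift {Z : Type*} {k : ℕ} (Q : (Fin k → Z) → Z → ℝ) (hk : 0 < k) :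
    Matrix (Fin k → Z) (Fin k → Z) ℝ :=
  Matrix.of fun w w' =>
    if ∀ (i : Fin k) (h : (i : ℕ) + 1 < k), w' i = w ⟨(i : ℕ) + 1, h⟩ then
      Q w (w' ⟨k - 1, Nat.sub_lt hk Nat.one_pos⟩)
    else 0

/-- The distribution of a length-`m` block of the process `g(X)`, where `X` is a
stationary Markov chain with transition matrix `P` and (initial) invariant
distribution `π`:
`p_m(y₁,…,y_m) = ∑_{x₁ ∈ g⁻¹(y₁),…,x_m ∈ g⁻¹(y_m)} π(x₁) ∏_{ℓ=2}^m P(x_{ℓ-1}, x_ℓ)`. -/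
def wordDist {X Y : Type*} [Fintype X] (P : Matrix X X ℝ) (π : X → ℝ) (g : X → Y)
    {m : ℕ} (y : Fin m → Y) : ℝ :=
  ∑ x : Fin m → X,
    if ∀ i, g (x i) = y i then
      ∏ i : Fin m,
        if (i : ℕ) = 0 then π (x i)
        else P (x ⟨(i : ℕ) - 1, lt_of_le_of_lt (Nat.sub_le _ _) i.isLt⟩) (x i)
    else 0





/-- entrywise matrix power, avoiding typeclass issues -/
def matPow {S : Type*} [Fintype S] (M : Matrix S S ℝ) : ℕ → S → S → ℝ
  | 0 => fun i j => if i = j then 1 else 0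
  | n + 1 => fun i j => ∑ l, matPow M n i l * M l j

lemma matPow_eq_pow {S : Type*} [Fintype S] (M : Matrix S S ℝ) :
    ∀ (n : ℕ) (i j : S), matPow M n i j = (M ^ n) i j := by
  intro n
  induction n with
  | zero => intro i j; rw [pow_zero]; rw [Matrix.one_apply]; rfl
  | succ n ih =>
    intro i j
    rw [pow_succ, Matrix.mul_apply]
    show ∑ l, matPow M n i l * M l j = _
    exact Finset.sum_congr rfl fun l _ => by rw [ih]

section Chain
variable {S : Type*} [Fintype S] {M : Matrix S S ℝ}

lemma pow_entry_nonneg (h : ∀ i j, 0 ≤ M i j) (n : ℕ) : ∀ i j, 0 ≤ matPow M n i j := by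
  induction n with
  | zero => intro i j; by_cases hij : i = j <;> simp [matPow, hij]
  | succ n ih =>
    intro i j
    exact Finset.sum_nonneg fun l _ => mul_nonneg (ih i l) (h l j)

lemma pow_entry_pos_step (h : ∀ i j, 0 ≤ M i j) {n : ℕ} {i l j : S}
    (h1 : 0 < matPow M n i l) (h2 : 0 < M l j) : 0 < matPow M (n + 1) i j := by
  show (0:ℝ) < ∑ l', matPow M n i l' * M l' j
  have hterm : 0 < matPow M n i l * M l j := mul_pos h1 h2
  refine lt_of_lt_of_le hterm ?_
  exact Finset.single_le_sum (f := fun l' => matPow M n i l' * M l' j)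
    (fun l' _ => mul_nonneg (pow_entry_nonneg h n i l') (h l' j)) (Finset.mem_univ l)

/-- positive path gives positive power entry -/
lemma path_pow_pos (h : ∀ i j, 0 ≤ M i j) (c : ℕ → S) :
    ∀ n, (∀ i < n, 0 < M (c i) (c (i + 1))) → 0 < matPow M n (c 0) (c n) := by
  intro n
  induction n with
  | zero => intro _; simp [matPow]
  | succ n ih =>
    intro hc
    exact pow_entry_pos_step h (ih fun i hi => hc i (by omega)) (hc n (by omega))

/-- positive power entry gives positive path -/
lemma pow_pos_path (h : ∀ i j, 0 ≤ M i j) :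
    ∀ (n : ℕ) (i j : S), 0 < matPow M n i j →
      ∃ c : ℕ → S, c 0 = i ∧ c n = j ∧ ∀ m < n, 0 < M (c m) (c (m + 1)) := by
  intro n
  induction n with
  | zero =>
    intro i j hij
    have : i = j := by
      by_contra hne
      simp [matPow, hne] at hij
    exact ⟨fun _ => i, rfl, this ▸ rfl, by omega⟩
  | succ n ih =>
    intro i j hij
    replace hij : (0:ℝ) < ∑ l, matPow M n i l * M l j := hij
    have : ∃ l, 0 < matPow M n i l * M l j := by
      by_contra hno
      push_neg at hno
      have : ∑ l, matPow M n i l * M l j ≤ 0 := Finset.sum_nonpos fun l _ => hno l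
      linarith
    obtain ⟨l, hl⟩ := this
    have h1 : 0 < matPow M n i l := by
      rcases lt_or_ge 0 (matPow M n i l) with h' | h'
      · exact h'
      · nlinarith [h l j]
    have h2 : 0 < M l j := by nlinarith [pow_entry_nonneg h n i l]
    obtain ⟨c, hc0, hcn, hcs⟩ := ih i l h1
    refine ⟨fun m => if m ≤ n then c m else j, by simpa using hc0, by simp, ?_⟩
    intro m hm
    rcases lt_or_eq_of_le (Nat.lt_succ_iff.mp hm) with h' | h'
    · have : m + 1 ≤ n := h'
      simpa [Nat.le_of_lt h', this] using hcs m h'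
    · subst h'
      simp [hcn, h2, Nat.lt_irrefl]

lemma accessible_iff (i j : S) :
    Accessible M i j ↔ ∃ n, 1 ≤ n ∧ 0 < matPow M n i j := by
  unfold Accessible
  constructor
  · rintro ⟨n, h1, h2⟩; exact ⟨n, h1, by rw [matPow_eq_pow]; exact h2⟩
  · rintro ⟨n, h1, h2⟩; exact ⟨n, h1, by rw [← matPow_eq_pow]; exact h2⟩

lemma accessible_trans {i j l : S} (h : ∀ i j, 0 ≤ M i j)
    (h1 : Accessible M i j) (h2 : Accessible M j l) : Accessible M i l := by
  rw [accessible_iff] at h1 h2 ⊢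
  obtain ⟨n, hn1, hn⟩ := h1
  obtain ⟨m, hm1, hm⟩ := h2
  obtain ⟨c, hc0, hcn, hcs⟩ := pow_pos_path h n i j hn
  obtain ⟨d, hd0, hdm, hds⟩ := pow_pos_path h m j l hm
  set e : ℕ → S := fun t => if t ≤ n then c t else d (t - n) with he
  have he0 : e 0 = i := by simp [he, hc0]
  have henm : e (n + m) = l := by
    rcases Nat.eq_zero_or_pos m with rfl | hm0
    · simp [he, hcn, ← hd0, hdm]
    · rw [he]
      simp only [dif_neg]
      rw [if_neg (by omega), show n + m - n = m by omega, hdm]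
  have hes : ∀ t < n + m, 0 < M (e t) (e (t + 1)) := by
    intro t ht
    by_cases h1' : t + 1 ≤ n
    · rw [he]
      simp only [if_pos (by omega : t ≤ n), if_pos h1']
      exact hcs t (by omega)
    · by_cases h2' : t ≤ n
      · have htn : t = n := by omega
        subst htn
        rw [he]
        simp only [if_pos le_rfl, if_neg h1', show t + 1 - t = 1 by omega]
        have := hds 0 (by omega)
        rwa [hd0, ← hcn] at this
      · rw [he]
        simp only [if_neg h2', if_neg (by omega : ¬ t + 1 ≤ n)]
        have := hds (t - n) (by omega)
        rwa [show t - n + 1 = t + 1 - n by omega] at this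
  refine ⟨n + m, by omega, ?_⟩
  have := path_pow_pos h e (n + m) hes
  rwa [he0, henm] at this

end Chain

section Chain2
variable {S : Type*} [Fintype S] {M : Matrix S S ℝ}

/-- In any "accessibility-closed" finite set there is a recurrent state. -/
lemma exists_recurrent_in (h : ∀ i j, 0 ≤ M i j) (A : Finset S) (hne : A.Nonempty)
    (hcl : ∀ a ∈ A, ∀ b, Accessible M a b → b ∈ A) :
    ∃ r ∈ A, Recurrent M r := by
  classical
  set D : S → Finset S := fun s => insert s (univ.filter (Accessible M s)) with hD
  obtain ⟨r, hrA, hrmin⟩ := A.exists_min_image (fun s => (D s).card) hne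
  refine ⟨r, hrA, ?_⟩
  intro j hrj
  have hjA : j ∈ A := hcl r hrA j hrj
  have hsub : D j ⊆ D r := by
    intro t ht
    simp only [hD, Finset.mem_insert, Finset.mem_filter, Finset.mem_univ, true_and] at ht ⊢
    rcases ht with rfl | ht
    · exact Or.inr hrj
    · exact Or.inr (accessible_trans h hrj ht)
  have heq : D j = D r := Finset.eq_of_subset_of_card_le hsub (hrmin j hjA)
  have hrr : r ∈ D j := heq ▸ (Finset.mem_insert_self r _)
  simp only [hD, Finset.mem_insert, Finset.mem_filter, Finset.mem_univ, true_and] at hrr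
  rcases hrr with rfl | hrr
  · exact hrj
  · exact hrr

/-- invariance iterates to powers -/
lemma invariant_pow {ν : S → ℝ} (hinv : ∀ j, ∑ i, ν i * M i j = ν j) :
    ∀ (n : ℕ) (j : S), ∑ i, ν i * matPow M n i j = ν j := by
  intro n
  induction n with
  | zero =>
    intro j
    show ∑ i, ν i * (if i = j then (1:ℝ) else 0) = ν j
    rw [Finset.sum_eq_single j] <;> simp +contextual
  | succ n ih =>
    intro j
    show ∑ i, ν i * ∑ l, matPow M n i l * M l j = ν j
    simp only [Finset.mul_sum]
    rw [Finset.sum_comm]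
    calc ∑ l, (∑ i, ν i * (matPow M n i l * M l j))
        = ∑ l, (∑ i, ν i * matPow M n i l) * M l j := by
          refine Finset.sum_congr rfl fun l _ => ?_
          rw [Finset.sum_mul]; exact Finset.sum_congr rfl fun i _ => by ring
      _ = ν j := by simp only [ih]; exact hinv j

/-- A closed set is closed under powers. -/
lemma closed_pow {A : Finset S} (h : ∀ i j, 0 ≤ M i j)
    (hcl : ∀ a ∈ A, ∀ b, 0 < M a b → b ∈ A) :
    ∀ (n : ℕ) (a : S), a ∈ A → ∀ b, 0 < matPow M n a b → b ∈ A := by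
  intro n a ha b hb
  obtain ⟨c, hc0, hcn, hcs⟩ := pow_pos_path h n a b hb
  have : ∀ m ≤ n, c m ∈ A := by
    intro m
    induction m with
    | zero => intro _; rwa [hc0]
    | succ m ih => intro hm; exact hcl _ (ih (by omega)) _ (hcs m (by omega))
  exact hcn ▸ this n le_rfl

lemma row_sum_pow (hM : (∀ i j, 0 ≤ M i j) ∧ ∀ i, ∑ j, M i j = 1) :
    ∀ (n : ℕ) (i : S), ∑ j, matPow M n i j = 1 := by
  intro n
  induction n with
  | zero =>
    intro i
    show ∑ j, (if i = j then (1:ℝ) else 0) = 1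
    rw [Finset.sum_eq_single i] <;> simp +contextual [eq_comm]
  | succ n ih =>
    intro i
    show ∑ j, ∑ l, matPow M n i l * M l j = 1
    rw [Finset.sum_comm]
    calc ∑ l, ∑ j, matPow M n i l * M l j = ∑ l, matPow M n i l * ∑ j, M l j := by
          simp [Finset.mul_sum]
      _ = 1 := by simp only [hM.2]; simpa using ih i

/-- absorption: an invariant nonneg vector vanishes outside a closed set that is
reachable from every point of its support. -/
lemma absorption {ν : S → ℝ} (hM : (∀ i j, 0 ≤ M i j) ∧ ∀ i, ∑ j, M i j = 1)
    (hν0 : ∀ s, 0 ≤ ν s) (hinv : ∀ j, ∑ i, ν i * M i j = ν j)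
    (A : Finset S) (hcl : ∀ a ∈ A, ∀ b, 0 < M a b → b ∈ A)
    (hreach : ∀ s ∉ A, 0 < ν s → ∃ n, 0 < ∑ a ∈ A, matPow M n s a) :
    ∀ s ∉ A, ν s = 0 := by
  intro s0 hs0
  by_contra hnz
  have hpos : 0 < ν s0 := lt_of_le_of_ne (hν0 s0) (Ne.symm hnz)
  obtain ⟨n, hn⟩ := hreach s0 hs0 hpos
  have hA1 : ∀ a ∈ A, ∑ b ∈ A, matPow M n a b = 1 := by
    intro a ha
    have hout : ∀ b ∉ A, matPow M n a b = 0 := by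
      intro b hb
      by_contra hnz'
      have : 0 < matPow M n a b := lt_of_le_of_ne (pow_entry_nonneg hM.1 n a b) (Ne.symm hnz')
      exact hb (closed_pow hM.1 hcl n a ha b this)
    rw [← row_sum_pow hM n a, Finset.sum_subset (Finset.subset_univ A)]
    intro b _ hb; exact hout b hb
  have key : ∑ a ∈ A, ν a = ∑ i, ν i * ∑ a ∈ A, matPow M n i a := by
    simp only [Finset.mul_sum]
    rw [Finset.sum_comm]
    exact (Finset.sum_congr rfl fun a _ => (invariant_pow hinv n a).symm)
  have hlow : ∑ a ∈ A, ν a + ν s0 * ∑ a ∈ A, matPow M n s0 a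
      ≤ ∑ i, ν i * ∑ a ∈ A, matPow M n i a := by
    have h1 : ∑ a ∈ A, ν a = ∑ i ∈ A, ν i * ∑ a ∈ A, matPow M n i a := by
      refine Finset.sum_congr rfl fun a ha => ?_
      rw [hA1 a ha, mul_one]
    rw [h1]
    have : ∑ i ∈ A, ν i * ∑ a ∈ A, matPow M n i a + ν s0 * ∑ a ∈ A, matPow M n s0 a
        = ∑ i ∈ insert s0 A, ν i * ∑ a ∈ A, matPow M n i a := by
      rw [Finset.sum_insert hs0]; ring
    rw [this]
    refine Finset.sum_le_sum_of_subset_of_nonneg (Finset.subset_univ _) ?_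
    intro i _ _
    exact mul_nonneg (hν0 i) (Finset.sum_nonneg fun a _ => pow_entry_nonneg hM.1 n i a)
  nlinarith [mul_pos hpos hn, key]

/-- minimum principle -/
lemma min_principle {ν : S → ℝ} (h : ∀ i j, 0 ≤ M i j)
    (hν0 : ∀ s, 0 ≤ ν s) (hinv : ∀ j, ∑ i, ν i * M i j = ν j)
    {s0 : S} (h0 : ν s0 = 0) {s : S} (hacc : ∃ n, 0 < matPow M n s s0) : ν s = 0 := by
  obtain ⟨n, hn⟩ := hacc
  by_contra hnz
  have hpos : 0 < ν s := lt_of_le_of_ne (hν0 s) (Ne.symm hnz)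
  have := invariant_pow hinv n s0
  have hge : ν s * matPow M n s s0 ≤ ∑ i, ν i * matPow M n i s0 :=
    Finset.single_le_sum (f := fun i => ν i * matPow M n i s0)
      (fun i _ => mul_nonneg (hν0 i) (pow_entry_nonneg h n i s0)) (Finset.mem_univ s)
  nlinarith [mul_pos hpos hn]

end Chain2

section Supp
variable {X : Type*} [Fintype X] {P : Matrix X X ℝ}

/-- support of an invariant measure is closed -/
lemma supp_closed (hP0 : ∀ i j, 0 ≤ P i j) {π : X → ℝ} (hπ0 : ∀ x, 0 ≤ π x)
    (hπinv : ∀ j, ∑ i, π i * P i j = π j) {a b : X} (ha : 0 < π a) (hab : 0 < P a b) :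
    0 < π b := by
  have : π a * P a b ≤ ∑ i, π i * P i b :=
    Finset.single_le_sum (f := fun i => π i * P i b)
      (fun i _ => mul_nonneg (hπ0 i) (hP0 i b)) (Finset.mem_univ a)
  rw [hπinv b] at this
  nlinarith

/-- every point in the support of an invariant distribution communicates with every
other, given a single recurrent class -/
lemma supp_accessible (hP : (∀ i j, 0 ≤ P i j) ∧ ∀ i, ∑ j, P i j = 1)
    (hrec : (∃ i, Recurrent P i) ∧ ∀ i j, Recurrent P i → Recurrent P j → Accessible P i j)
    {π : X → ℝ} (hπ0 : ∀ x, 0 ≤ π x) (hπinv : ∀ j, ∑ i, π i * P i j = π j)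
    {a b : X} (ha : 0 < π a) (hb : 0 < π b) : Accessible P a b := by
  classical
  set R : Finset X := univ.filter (Recurrent P) with hR
  have hRcl : ∀ r ∈ R, ∀ b, 0 < P r b → b ∈ R := by
    intro r hr c hrc
    simp only [hR, Finset.mem_filter, Finset.mem_univ, true_and] at hr ⊢
    have hacc_rc : Accessible P r c := ⟨1, le_rfl, by simpa using hrc⟩
    intro l hcl
    have hrl : Accessible P r l := accessible_trans hP.1 hacc_rc hcl
    exact accessible_trans hP.1 (hr l hrl) hacc_rc
  have hsuppR : ∀ s : X, 0 < π s → Recurrent P s := by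
    intro s hs
    by_contra hns
    have hsR : s ∉ R := by simp [hR, hns]
    have : π s = 0 := by
      refine absorption hP hπ0 hπinv R hRcl ?_ s hsR
      intro t htR hνt
      have : ∃ r ∈ insert t (univ.filter (Accessible P t)), Recurrent P r := by
        refine exists_recurrent_in hP.1 _ ⟨t, Finset.mem_insert_self _ _⟩ ?_
        intro x hx y hxy
        simp only [Finset.mem_insert, Finset.mem_filter, Finset.mem_univ, true_and] at hx ⊢
        rcases hx with rfl | hx
        · exact Or.inr hxy
        · exact Or.inr (accessible_trans hP.1 hx hxy)
      obtain ⟨r, hrmem, hrrec⟩ := this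
      simp only [Finset.mem_insert, Finset.mem_filter, Finset.mem_univ, true_and] at hrmem
      rcases hrmem with rfl | hrt
      · exact absurd (by simp [hR, hrrec]) htR
      · rw [accessible_iff] at hrt
        obtain ⟨n, hn1, hn⟩ := hrt
        refine ⟨n, ?_⟩
        have hrR : r ∈ R := by simp [hR, hrrec]
        calc (0:ℝ) < matPow P n t r := hn
          _ ≤ ∑ a ∈ R, matPow P n t a :=
            Finset.single_le_sum (fun a _ => pow_entry_nonneg hP.1 n t a) hrR
    linarith
  exact hrec.2 a b (hsuppR a ha) (hsuppR b hb)

end Supp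

section Words
variable {X Y : Type*} [Fintype X] [Fintype Y] (P : Matrix X X ℝ) (π : X → ℝ) (g : X → Y)

/-- the weight of a path -/
def wt {m : ℕ} (x : Fin m → X) : ℝ :=
  ∏ i : Fin m,
    if (i : ℕ) = 0 then π (x i)
    else P (x ⟨(i : ℕ) - 1, lt_of_le_of_lt (Nat.sub_le _ _) i.isLt⟩) (x i)

def wordDist' {X Y : Type*} [Fintype X] (P : Matrix X X ℝ) (π : X → ℝ) (g : X → Y)
    {m : ℕ} (y : Fin m → Y) : ℝ :=
  ∑ x : Fin m → X, if ∀ i, g (x i) = y i then wt P π x else 0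

lemma sum_cons_eq {α : Type*} [Fintype α] {n : ℕ} (F : (Fin (n + 1) → α) → ℝ) :
    ∑ v, F v = ∑ s : α, ∑ x : Fin n → α, F (Fin.cons s x) := by
  rw [← Equiv.sum_comp (Fin.consEquiv fun _ => α) F, Fintype.sum_prod_type]
  rfl

lemma sum_snoc_eq {α : Type*} [Fintype α] {n : ℕ} (F : (Fin (n + 1) → α) → ℝ) :
    ∑ v, F v = ∑ x : Fin n → α, ∑ t : α, F (Fin.snoc x t) := by
  rw [Finset.sum_comm, ← Equiv.sum_comp (Fin.snocEquiv fun _ => α) F, Fintype.sum_prod_type]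
  rfl

lemma wt_eq {m : ℕ} (v : Fin (m + 1) → X) :
    wt P π v = π (v 0) * ∏ i : Fin m, P (v i.castSucc) (v i.succ) := by
  rw [wt, Fin.prod_univ_succ]
  refine congrArg₂ (· * ·) (by simp) (Finset.prod_congr rfl fun i _ => ?_)
  rw [if_neg (by simp)]
  congr 1

lemma wt_nonneg (hP0 : ∀ i j, 0 ≤ P i j) (hπ0 : ∀ x, 0 ≤ π x) {m : ℕ} (x : Fin m → X) :
    0 ≤ wt P π x := by
  refine Finset.prod_nonneg fun i _ => ?_
  by_cases h : (i : ℕ) = 0 <;> simp [h, hP0, hπ0]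

lemma wt_snoc {m : ℕ} (x : Fin (m + 1) → X) (t : X) :
    wt P π (Fin.snoc x t) = wt P π x * P (x (Fin.last m)) t := by
  rw [wt_eq, wt_eq]
  have h0 : (Fin.snoc x t : Fin (m+2) → X) 0 = x 0 := by
    have : (0 : Fin (m + 2)) = Fin.castSucc 0 := rfl
    rw [this, Fin.snoc_castSucc]
  rw [h0, Fin.prod_univ_castSucc]
  have h1 : ∀ i : Fin m,
      (Fin.snoc x t : Fin (m+2) → X) i.castSucc.castSucc = x i.castSucc := by
    intro i; rw [Fin.snoc_castSucc]
  have h2 : ∀ i : Fin m,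
      (Fin.snoc x t : Fin (m+2) → X) i.castSucc.succ = x i.succ := by
    intro i; rw [Fin.succ_castSucc, Fin.snoc_castSucc]
  have h3 : (Fin.snoc x t : Fin (m+2) → X) (Fin.last m).castSucc = x (Fin.last m) :=
    Fin.snoc_castSucc ..
  have h4 : (Fin.snoc x t : Fin (m+2) → X) (Fin.last m).succ = t := by
    rw [Fin.succ_last, Fin.snoc_last]
  simp only [h1, h2, h3, h4]
  ring

lemma wt_cons {m : ℕ} (s : X) (x : Fin (m + 1) → X) :
    wt P π (Fin.cons s x) = π s * P s (x 0) * ∏ i : Fin m, P (x i.castSucc) (x i.succ) := by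
  rw [wt_eq, Fin.cons_zero, Fin.prod_univ_succ]
  have h0 : (Fin.cons s x : Fin (m+2) → X) (Fin.castSucc 0) = s := rfl
  have h1 : (Fin.cons s x : Fin (m+2) → X) (Fin.succ 0) = x 0 := Fin.cons_succ ..
  have h2 : ∀ i : Fin m,
      (Fin.cons s x : Fin (m+2) → X) i.succ.castSucc = x i.castSucc := by
    intro i; rw [← Fin.succ_castSucc]; exact Fin.cons_succ ..
  have h3 : ∀ i : Fin m,
      (Fin.cons s x : Fin (m+2) → X) i.succ.succ = x i.succ := fun i => Fin.cons_succ ..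
  simp only [h0, h1, h2, h3]
  ring


lemma snoc_match {m : ℕ} (x : Fin (m + 1) → X) (t : X) (w : Fin (m + 1) → Y) (z : Y) :
    (∀ i, g ((Fin.snoc x t : Fin (m+2) → X) i) = (Fin.snoc w z : Fin (m+2) → Y) i) ↔
      ((∀ i, g (x i) = w i) ∧ g t = z) := by
  constructor
  · intro h
    refine ⟨fun i => ?_, ?_⟩
    · have := h i.castSucc; rwa [Fin.snoc_castSucc, Fin.snoc_castSucc] at this
    · have := h (Fin.last _); rwa [Fin.snoc_last, Fin.snoc_last] at this
  · rintro ⟨h1, h2⟩ i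
    refine Fin.lastCases ?_ ?_ i
    · rwa [Fin.snoc_last, Fin.snoc_last]
    · intro j; rw [Fin.snoc_castSucc, Fin.snoc_castSucc]; exact h1 j

lemma cons_match {m : ℕ} (s : X) (x : Fin (m + 1) → X) (w : Fin (m + 1) → Y) (z0 : Y) :
    (∀ i, g ((Fin.cons s x : Fin (m+2) → X) i) = (Fin.cons z0 w : Fin (m+2) → Y) i) ↔
      (g s = z0 ∧ ∀ i, g (x i) = w i) := by
  constructor
  · intro h
    refine ⟨by simpa using h 0, fun i => by simpa using h i.succ⟩
  · rintro ⟨h1, h2⟩ i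
    refine Fin.cases ?_ ?_ i
    · simpa using h1
    · intro j; simpa using h2 j

variable {P π}

lemma marg_snoc (hP : (∀ i j, 0 ≤ P i j) ∧ ∀ i, ∑ j, P i j = 1) {m : ℕ} (w : Fin (m + 1) → Y) :
    ∑ z, wordDist' P π g (Fin.snoc w z) = wordDist' P π g w := by
  have h1 : ∀ z, wordDist' P π g (Fin.snoc w z) =
      ∑ x : Fin (m+1) → X, ∑ t,
        (if ∀ i, g (x i) = w i then wt P π x else 0) *
          (if g t = z then P (x (Fin.last m)) t else 0) := by
    intro z
    rw [wordDist', sum_snoc_eq]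
    refine Finset.sum_congr rfl fun x _ => Finset.sum_congr rfl fun t _ => ?_
    by_cases hA : ∀ i, g (x i) = w i <;> by_cases ht : g t = z <;>
      simp [hA, ht, snoc_match, wt_snoc]
  simp only [h1]
  rw [Finset.sum_comm]
  refine Finset.sum_congr rfl fun x _ => ?_
  rw [Finset.sum_comm]
  simp only [← Finset.mul_sum]
  have : ∑ t, ∑ z, (if g t = z then P (x (Fin.last m)) t else 0) = 1 := by
    calc ∑ t, ∑ z, (if g t = z then P (x (Fin.last m)) t else 0)
        = ∑ t, P (x (Fin.last m)) t := Finset.sum_congr rfl fun t _ => by simp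
      _ = 1 := hP.2 _
  rw [this, mul_one]


lemma marg_cons (hP : (∀ i j, 0 ≤ P i j) ∧ ∀ i, ∑ j, P i j = 1)
    (hπinv : ∀ j, ∑ i, π i * P i j = π j) {m : ℕ} (w : Fin (m + 1) → Y) :
    ∑ z0, wordDist' P π g (Fin.cons z0 w) = wordDist' P π g w := by
  have h1 : ∀ z0, wordDist' P π g (Fin.cons z0 w) =
      ∑ x : Fin (m+1) → X, ∑ s,
        (if ∀ i, g (x i) = w i then ∏ i : Fin m, P (x i.castSucc) (x i.succ) else 0) *
          (if g s = z0 then π s * P s (x 0) else 0) := by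
    intro z0
    rw [wordDist', sum_cons_eq, Finset.sum_comm]
    refine Finset.sum_congr rfl fun x _ => Finset.sum_congr rfl fun s _ => ?_
    by_cases hA : ∀ i, g (x i) = w i <;> by_cases hs : g s = z0 <;>
      simp [hA, hs, cons_match, wt_cons] <;> ring
  simp only [h1]
  rw [Finset.sum_comm]
  refine Finset.sum_congr rfl fun x _ => ?_
  rw [Finset.sum_comm]
  simp only [← Finset.mul_sum]
  have : ∑ s, ∑ z0, (if g s = z0 then π s * P s (x 0) else 0) = π (x 0) := by
    calc ∑ s, ∑ z0, (if g s = z0 then π s * P s (x 0) else 0)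
        = ∑ s, π s * P s (x 0) := Finset.sum_congr rfl fun s _ => by simp
      _ = π (x 0) := hπinv _
  rw [this]
  by_cases hA : ∀ i, g (x i) = w i <;> simp [hA, wt_eq] <;> ring

lemma sum_wt (hP : (∀ i j, 0 ≤ P i j) ∧ ∀ i, ∑ j, P i j = 1) (hπ1 : ∑ a, π a = 1) :
    ∀ m : ℕ, ∑ x : Fin (m + 1) → X, wt P π x = 1 := by
  intro m
  induction m with
  | zero =>
    rw [sum_cons_eq]
    calc ∑ s, ∑ x : Fin 0 → X, wt P π (Fin.cons s x)
        = ∑ s : X, π s := by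
          refine Finset.sum_congr rfl fun s _ => ?_
          rw [Fintype.sum_unique]
          simp [wt_eq]
      _ = 1 := hπ1
  | succ m ih =>
    rw [sum_snoc_eq]
    calc ∑ x : Fin (m+1) → X, ∑ t, wt P π (Fin.snoc x t)
        = ∑ x : Fin (m+1) → X, wt P π x := by
          refine Finset.sum_congr rfl fun x _ => ?_
          simp only [wt_snoc, ← Finset.mul_sum, hP.2, mul_one]
      _ = 1 := ih

lemma wordDist'_nonneg (hP0 : ∀ i j, 0 ≤ P i j) (hπ0 : ∀ x, 0 ≤ π x) {m : ℕ}
    (y : Fin m → Y) : 0 ≤ wordDist' P π g y := by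
  refine Finset.sum_nonneg fun x _ => ?_
  by_cases h : ∀ i, g (x i) = y i <;> simp [h, wt_nonneg _ _ hP0 hπ0]

lemma wordDist'_total (hP : (∀ i j, 0 ≤ P i j) ∧ ∀ i, ∑ j, P i j = 1) (hπ1 : ∑ a, π a = 1)
    (m : ℕ) : ∑ y : Fin (m + 1) → Y, wordDist' P π g y = 1 := by
  rw [show (∑ y : Fin (m+1) → Y, wordDist' P π g y)
      = ∑ x : Fin (m+1) → X, ∑ y : Fin (m+1) → Y,
          (if ∀ i, g (x i) = y i then wt P π x else 0) from by
    rw [Finset.sum_comm]; rfl]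
  calc ∑ x : Fin (m+1) → X, ∑ y : Fin (m+1) → Y, (if ∀ i, g (x i) = y i then wt P π x else 0)
      = ∑ x : Fin (m+1) → X, wt P π x := by
        refine Finset.sum_congr rfl fun x _ => ?_
        rw [Finset.sum_eq_single (fun i => g (x i))]
        · simp
        · intro y _ hy
          rw [if_neg]
          intro hc
          exact hy (funext fun i => (hc i).symm)
        · simp
    _ = 1 := sum_wt hP hπ1 m

end Words

section Pos
variable {X Y : Type*} [Fintype X] [Fintype Y] {P : Matrix X X ℝ} {π : X → ℝ} {g : X → Y}

lemma wt_pos (hP0 : ∀ i j, 0 ≤ P i j) (hπ0 : ∀ x, 0 ≤ π x) {m : ℕ} {x : Fin (m+1) → X} :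
    0 < wt P π x ↔ 0 < π (x 0) ∧ ∀ i : Fin m, 0 < P (x i.castSucc) (x i.succ) := by
  rw [wt_eq]
  constructor
  · intro h
    have hprod : 0 ≤ ∏ i : Fin m, P (x i.castSucc) (x i.succ) :=
      Finset.prod_nonneg fun i _ => hP0 _ _
    have h1 : 0 < π (x 0) := by
      rcases lt_or_ge 0 (π (x 0)) with h' | h'
      · exact h'
      · nlinarith
    refine ⟨h1, fun i => ?_⟩
    rcases lt_or_ge 0 (P (x i.castSucc) (x i.succ)) with h' | h'
    · exact h'
    · have hz : P (x i.castSucc) (x i.succ) = 0 := le_antisymm h' (hP0 _ _)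
      have : (∏ i : Fin m, P (x i.castSucc) (x i.succ)) = 0 :=
        Finset.prod_eq_zero (Finset.mem_univ i) hz
      nlinarith
  · rintro ⟨h1, h2⟩
    exact mul_pos h1 (Finset.prod_pos fun i _ => h2 i)

lemma wordDist'_pos_iff (hP0 : ∀ i j, 0 ≤ P i j) (hπ0 : ∀ x, 0 ≤ π x) {m : ℕ}
    {y : Fin m → Y} :
    0 < wordDist' P π g y ↔ ∃ x : Fin m → X, (∀ i, g (x i) = y i) ∧ 0 < wt P π x := by
  constructor
  · intro h
    by_contra hno
    push_neg at hno
    have : wordDist' P π g y ≤ 0 := by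
      refine Finset.sum_nonpos fun x _ => ?_
      by_cases hx : ∀ i, g (x i) = y i
      · rw [if_pos hx]
        by_contra hpos
        push_neg at hpos
        exact absurd hpos (not_lt.mpr (hno x hx))
      · simp [hx]
    linarith
  · rintro ⟨x, hx, hxw⟩
    have hle : (if ∀ i, g (x i) = y i then wt P π x else 0) ≤ wordDist' P π g y := by
      refine Finset.single_le_sum (f := fun x => if ∀ i, g (x i) = y i then wt P π x else 0)
        (fun x' _ => ?_) (Finset.mem_univ x)
      by_cases hx' : ∀ i, g (x' i) = y i <;> simp [hx', wt_nonneg _ _ hP0 hπ0]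
    rw [if_pos hx] at hle
    linarith

/-- `w` is realizable by a positive-probability path ending at `a`. -/
def RealW (P : Matrix X X ℝ) (π : X → ℝ) (g : X → Y) {k' : ℕ}
    (w : Fin (k' + 1) → Y) (a : X) : Prop :=
  ∃ x : Fin (k' + 1) → X, (∀ i, g (x i) = w i) ∧ (∀ i, 0 < π (x i)) ∧
    (∀ j (h : j + 1 < k' + 1), 0 < P (x ⟨j, by omega⟩) (x ⟨j + 1, h⟩)) ∧
    x (Fin.last k') = a

lemma steps_nat {m : ℕ} {x : Fin (m+1) → X}
    (h : ∀ i : Fin m, 0 < P (x i.castSucc) (x i.succ)) :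
    ∀ j (hj : j + 1 < m + 1), 0 < P (x ⟨j, by omega⟩) (x ⟨j + 1, hj⟩) := by
  intro j hj
  have := h ⟨j, by omega⟩
  convert this using 2 <;> simp [Fin.ext_iff]

lemma steps_fin {m : ℕ} {x : Fin (m+1) → X}
    (h : ∀ j (hj : j + 1 < m + 1), 0 < P (x ⟨j, by omega⟩) (x ⟨j + 1, hj⟩)) :
    ∀ i : Fin m, 0 < P (x i.castSucc) (x i.succ) := by
  intro i
  have := h i.1 (by omega)
  convert this using 2 <;> rfl

lemma pi_pos_along (hP0 : ∀ i j, 0 ≤ P i j) (hπ0 : ∀ x, 0 ≤ π x)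
    (hπinv : ∀ j, ∑ i, π i * P i j = π j) {m : ℕ} {x : Fin (m+1) → X}
    (h0 : 0 < π (x 0))
    (hs : ∀ j (hj : j + 1 < m + 1), 0 < P (x ⟨j, by omega⟩) (x ⟨j + 1, hj⟩)) :
    ∀ i, 0 < π (x i) := by
  have key : ∀ j (hj : j < m + 1), 0 < π (x ⟨j, hj⟩) := by
    intro j
    induction j with
    | zero => intro hj; exact h0
    | succ j ih =>
      intro hj
      exact supp_closed hP0 hπ0 hπinv (ih (by omega)) (hs j hj)
  intro i
  exact key i.1 i.isLt

lemma exists_RealW (hP0 : ∀ i j, 0 ≤ P i j) (hπ0 : ∀ x, 0 ≤ π x)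
    (hπinv : ∀ j, ∑ i, π i * P i j = π j) {k' : ℕ} {w : Fin (k'+1) → Y}
    (hpos : 0 < wordDist' P π g w) : ∃ a, 0 < π a ∧ RealW P π g w a := by
  obtain ⟨x, hx, hwt⟩ := (wordDist'_pos_iff hP0 hπ0).mp hpos
  obtain ⟨h0, hsteps⟩ := (wt_pos hP0 hπ0).mp hwt
  have hs := steps_nat hsteps
  have hall := pi_pos_along hP0 hπ0 hπinv h0 hs
  exact ⟨x (Fin.last k'), hall _, x, hx, hall, hs, rfl⟩

lemma pos_of_RealW (hP0 : ∀ i j, 0 ≤ P i j) (hπ0 : ∀ x, 0 ≤ π x) {k' : ℕ}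
    {w : Fin (k'+1) → Y} {a : X} (h : RealW P π g w a) : 0 < wordDist' P π g w := by
  obtain ⟨x, hx, hπx, hs, _⟩ := h
  exact (wordDist'_pos_iff hP0 hπ0).mpr ⟨x, hx, (wt_pos hP0 hπ0).mpr ⟨hπx 0, steps_fin hs⟩⟩

end Pos

section Lift
variable {X Y : Type*} [Fintype X] [Fintype Y] {P : Matrix X X ℝ} {π : X → ℝ} {g : X → Y}
  {k' : ℕ} {Q : (Fin (k' + 1) → Y) → Y → ℝ}

/-- shift a word left by one and append a letter -/
def shiftW {k' : ℕ} (w : Fin (k' + 1) → Y) (z : Y) : Fin (k' + 1) → Y :=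
  fun i => if h : (i : ℕ) + 1 < k' + 1 then w ⟨(i : ℕ) + 1, h⟩ else z

lemma shiftW_last {k' : ℕ} (w : Fin (k' + 1) → Y) (z : Y) :
    shiftW w z ⟨k', by omega⟩ = z := by
  rw [shiftW, dif_neg (show ¬(k' + 1 < k' + 1) by omega)]

lemma doobLift_shiftW (w : Fin (k' + 1) → Y) (z : Y) :
    doobLift Q (k'.succ_pos) w (shiftW w z) = Q w z := by
  rw [doobLift]
  show (if _ then _ else _) = _
  rw [if_pos, show ((⟨k' + 1 - 1, _⟩ : Fin (k'+1)) : Fin (k'+1)) = ⟨k', by omega⟩ from by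
    simp [Fin.ext_iff], shiftW_last]
  intro i h
  rw [shiftW, dif_pos h]

lemma doobLift_apply_ne (w w' : Fin (k' + 1) → Y)
    (h : ¬ ∀ (i : Fin (k'+1)) (h : (i : ℕ) + 1 < k' + 1), w' i = w ⟨(i : ℕ) + 1, h⟩) :
    doobLift Q (k'.succ_pos) w w' = 0 := by
  rw [doobLift]; exact if_neg h

lemma doobLift_apply_eq (w w' : Fin (k' + 1) → Y)
    (h : ∀ (i : Fin (k'+1)) (h : (i : ℕ) + 1 < k' + 1), w' i = w ⟨(i : ℕ) + 1, h⟩) :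
    doobLift Q (k'.succ_pos) w w' = Q w (w' ⟨k', by omega⟩) := by
  rw [doobLift]
  show (if _ then _ else _) = _
  rw [if_pos h]
  exact congrArg (Q w) (congrArg w' (Fin.ext (by simp)))

lemma compat_shiftW {w w' : Fin (k' + 1) → Y}
    (h : ∀ (i : Fin (k'+1)) (h : (i : ℕ) + 1 < k' + 1), w' i = w ⟨(i : ℕ) + 1, h⟩) :
    w' = shiftW w (w' ⟨k', by omega⟩) := by
  funext i
  rw [shiftW]
  split
  · exact h i (by assumption)
  · congr 1
    simp only [Fin.ext_iff]
    omega

end Lift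

section Lift2
variable {X Y : Type*} [Fintype X] [Fintype Y] {P : Matrix X X ℝ} {π : X → ℝ} {g : X → Y}
  {k' : ℕ} {Q : (Fin (k' + 1) → Y) → Y → ℝ}

lemma Q_nonneg (hP0 : ∀ i j, 0 ≤ P i j) (hπ0 : ∀ x, 0 ≤ π x) (hY : 0 < Fintype.card Y)
    (hQ : ∀ w z, Q w z = if 0 < wordDist' P π g w
      then wordDist' P π g (Fin.snoc w z) / wordDist' P π g w
      else 1 / (Fintype.card Y : ℝ)) :
    ∀ w z, 0 ≤ Q w z := by
  intro w z
  rw [hQ]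
  split
  · exact div_nonneg (wordDist'_nonneg g hP0 hπ0 _) (le_of_lt (by assumption))
  · positivity

lemma Q_pos_of (hQ : ∀ w z, Q w z = if 0 < wordDist' P π g w
      then wordDist' P π g (Fin.snoc w z) / wordDist' P π g w
      else 1 / (Fintype.card Y : ℝ))
    {w : Fin (k'+1) → Y} {z : Y} (hw : 0 < wordDist' P π g w)
    (hsnoc : 0 < wordDist' P π g (Fin.snoc w z)) : 0 < Q w z := by
  rw [hQ, if_pos hw]
  exact div_pos hsnoc hw

lemma Q_pos_uniform (hY : 0 < Fintype.card Y)
    (hQ : ∀ w z, Q w z = if 0 < wordDist' P π g w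
      then wordDist' P π g (Fin.snoc w z) / wordDist' P π g w
      else 1 / (Fintype.card Y : ℝ))
    {w : Fin (k'+1) → Y} (hw : ¬ 0 < wordDist' P π g w) (z : Y) : 0 < Q w z := by
  rw [hQ, if_neg hw]
  positivity

lemma Q_row (hP : (∀ i j, 0 ≤ P i j) ∧ ∀ i, ∑ j, P i j = 1) (hπ0 : ∀ x, 0 ≤ π x)
    (hY : 0 < Fintype.card Y)
    (hQ : ∀ w z, Q w z = if 0 < wordDist' P π g w
      then wordDist' P π g (Fin.snoc w z) / wordDist' P π g w
      else 1 / (Fintype.card Y : ℝ)) :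
    ∀ w, ∑ z, Q w z = 1 := by
  intro w
  by_cases hw : 0 < wordDist' P π g w
  · simp only [hQ, if_pos hw]
    rw [← Finset.sum_div, marg_snoc g hP w, div_self (ne_of_gt hw)]
  · simp only [hQ, if_neg hw]
    rw [Finset.sum_const, Finset.card_univ, nsmul_eq_mul]
    field_simp

lemma M_nonneg (hQ0 : ∀ w z, 0 ≤ Q w z) :
    ∀ w w', 0 ≤ doobLift Q (k'.succ_pos) w w' := by
  intro w w'
  by_cases h : ∀ (i : Fin (k'+1)) (h : (i : ℕ) + 1 < k' + 1), w' i = w ⟨(i : ℕ) + 1, h⟩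
  · rw [doobLift_apply_eq _ _ h]; exact hQ0 _ _
  · rw [doobLift_apply_ne _ _ h]

lemma shiftW_inj (w : Fin (k'+1) → Y) : Function.Injective (shiftW w) := by
  intro z1 z2 h
  have := congrFun h ⟨k', by omega⟩
  rwa [shiftW_last, shiftW_last] at this

lemma M_row (hQrow : ∀ w, ∑ z, Q w z = 1) :
    ∀ w, ∑ w', doobLift Q (k'.succ_pos) w w' = 1 := by
  intro w
  have h1 : ∑ w' ∈ Finset.image (shiftW w) Finset.univ, doobLift Q (k'.succ_pos) w w'
      = ∑ w', doobLift Q (k'.succ_pos) w w' := by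
    refine Finset.sum_subset (Finset.subset_univ _) ?_
    intro w' _ hnm
    refine doobLift_apply_ne _ _ fun hc => hnm ?_
    rw [compat_shiftW hc]
    exact Finset.mem_image_of_mem _ (Finset.mem_univ _)
  rw [← h1, Finset.sum_image (fun z1 _ z2 _ h => shiftW_inj w h)]
  calc ∑ z, doobLift Q (k'.succ_pos) w (shiftW w z) = ∑ z, Q w z :=
        Finset.sum_congr rfl fun z _ => doobLift_shiftW w z
    _ = 1 := hQrow w

lemma follow1 (hP : (∀ i j, 0 ≤ P i j) ∧ ∀ i, ∑ j, P i j = 1) (hπ0 : ∀ x, 0 ≤ π x)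
    (hπinv : ∀ j, ∑ i, π i * P i j = π j)
    (hQ : ∀ w z, Q w z = if 0 < wordDist' P π g w
      then wordDist' P π g (Fin.snoc w z) / wordDist' P π g w
      else 1 / (Fintype.card Y : ℝ))
    {w : Fin (k'+1) → Y} {a a' : X} (hr : RealW P π g w a) (ha' : 0 < P a a') :
    RealW P π g (shiftW w (g a')) a' ∧
      0 < doobLift Q (k'.succ_pos) w (shiftW w (g a')) := by
  obtain ⟨x, hgx, hπx, hsx, hlast⟩ := hr
  have hπa : 0 < π a := hlast ▸ hπx (Fin.last k')
  have hπa' : 0 < π a' := supp_closed hP.1 hπ0 hπinv hπa ha'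
  have hlast' : x ⟨k', by omega⟩ = a := hlast
  constructor
  · refine ⟨fun i => if h : (i : ℕ) + 1 < k' + 1 then x ⟨(i : ℕ) + 1, h⟩ else a',
      ?_, ?_, ?_, ?_⟩
    · intro i
      dsimp only
      rw [shiftW]
      split
      · exact hgx _
      · rfl
    · intro i
      dsimp only
      split
      · exact hπx _
      · exact hπa'
    · intro j hj
      dsimp only
      rw [dif_pos hj]
      by_cases h2 : j + 1 + 1 < k' + 1
      · rw [dif_pos h2]
        exact hsx (j+1) h2
      · rw [dif_neg h2]
        have : (⟨j + 1, hj⟩ : Fin (k'+1)) = ⟨k', by omega⟩ := Fin.ext (by simp; omega)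
        rw [this, hlast']
        exact ha'
    · dsimp only
      rw [dif_neg (show ¬((Fin.last k' : ℕ) + 1 < k' + 1) by simp)]
  · have hw : 0 < wordDist' P π g w :=
      pos_of_RealW hP.1 hπ0 ⟨x, hgx, hπx, hsx, hlast⟩
    have hsnoc : 0 < wordDist' P π g (Fin.snoc w (g a')) := by
      refine (wordDist'_pos_iff hP.1 hπ0).mpr ⟨Fin.snoc x a', ?_, ?_⟩
      · exact (snoc_match g x a' w (g a')).mpr ⟨hgx, rfl⟩
      · rw [wt_snoc, hlast]
        exact mul_pos ((wt_pos hP.1 hπ0).mpr ⟨hπx 0, steps_fin hsx⟩) ha'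
    rw [doobLift_shiftW]
    exact Q_pos_of hQ hw hsnoc

end Lift2

section Lift3
variable {X Y : Type*} [Fintype X] [Fintype Y] {P : Matrix X X ℝ} {π : X → ℝ} {g : X → Y}
  {k' : ℕ} {Q : (Fin (k' + 1) → Y) → Y → ℝ}

lemma followPath (hP : (∀ i j, 0 ≤ P i j) ∧ ∀ i, ∑ j, P i j = 1) (hπ0 : ∀ x, 0 ≤ π x)
    (hπinv : ∀ j, ∑ i, π i * P i j = π j) (hY : 0 < Fintype.card Y)
    (hQ : ∀ w z, Q w z = if 0 < wordDist' P π g w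
      then wordDist' P π g (Fin.snoc w z) / wordDist' P π g w
      else 1 / (Fintype.card Y : ℝ))
    (c : ℕ → X) (n : ℕ) (hc : ∀ i < n, 0 < P (c i) (c (i + 1)))
    {w : Fin (k'+1) → Y} (hw : RealW P π g w (c 0)) :
    ∃ w', RealW P π g w' (c n) ∧ 0 < matPow (doobLift Q (k'.succ_pos)) n w w' ∧
      ∀ (i : Fin (k'+1)), k' + 1 ≤ (i : ℕ) + n → w' i = g (c ((i : ℕ) + n - k')) := by
  have hM0 : ∀ v v', 0 ≤ doobLift Q (k'.succ_pos) v v' :=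
    M_nonneg (Q_nonneg hP.1 hπ0 hY hQ)
  induction n with
  | zero =>
    refine ⟨w, hw, by simp [matPow], fun i hi => absurd hi (by omega)⟩
  | succ n ih =>
    obtain ⟨w', hr', hpow, hform⟩ := ih (fun i hi => hc i (by omega))
    obtain ⟨hr'', hstep⟩ := follow1 hP hπ0 hπinv hQ hr' (hc n (by omega))
    refine ⟨shiftW w' (g (c (n+1))), hr'', pow_entry_pos_step hM0 hpow hstep, ?_⟩
    intro i hi
    rw [shiftW]
    split
    · next h =>
      rw [hform ⟨(i : ℕ) + 1, h⟩ (show k' + 1 ≤ (i : ℕ) + 1 + n by omega)]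
      exact congrArg g (congrArg c
        (show (i : ℕ) + 1 + n - k' = (i : ℕ) + (n + 1) - k' from by omega))
    · next h =>
      exact congrArg g (congrArg c
        (show n + 1 = (i : ℕ) + (n + 1) - k' from by have := i.isLt; omega))

lemma mutual_access
    (hP : (∀ i j, 0 ≤ P i j) ∧ ∀ i, ∑ j, P i j = 1)
    (hrec : (∃ i, Recurrent P i) ∧ ∀ i j, Recurrent P i → Recurrent P j → Accessible P i j)
    (hπ0 : ∀ x, 0 ≤ π x) (hπinv : ∀ j, ∑ i, π i * P i j = π j) (hY : 0 < Fintype.card Y)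
    (hQ : ∀ w z, Q w z = if 0 < wordDist' P π g w
      then wordDist' P π g (Fin.snoc w z) / wordDist' P π g w
      else 1 / (Fintype.card Y : ℝ))
    {u v : Fin (k'+1) → Y} (hu : 0 < wordDist' P π g u) (hv : 0 < wordDist' P π g v) :
    ∃ n, 0 < matPow (doobLift Q (k'.succ_pos)) n u v := by
  obtain ⟨a, hπa, hru⟩ := exists_RealW hP.1 hπ0 hπinv hu
  obtain ⟨b, hπb, hrv⟩ := exists_RealW hP.1 hπ0 hπinv hv
  obtain ⟨x', hgx', hπx', hsx', hlastx'⟩ := hrv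
  obtain ⟨n, hn1, hnpos⟩ :=
    (accessible_iff a (x' 0)).mp (supp_accessible hP hrec hπ0 hπinv hπa (hπx' 0))
  obtain ⟨c0, hc00, hc0n, hc0s⟩ := pow_pos_path hP.1 n a (x' 0) hnpos
  set c : ℕ → X := fun j => if h : j < n then c0 j else x' ⟨min (j - n) k', by omega⟩
    with hcdef
  have hc0 : c 0 = a := by rw [hcdef]; simp only [dif_pos (by omega : 0 < n)]; exact hc00
  have hcx' : ∀ j : ℕ, ∀ hj : j ≤ k', c (n + j) = x' ⟨j, by omega⟩ := by
    intro j hj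
    rw [hcdef]
    simp only [dif_neg (by omega : ¬ n + j < n)]
    exact congrArg x' (Fin.ext (by simp; omega))
  have hsteps : ∀ i < n + k', 0 < P (c i) (c (i + 1)) := by
    intro i hi
    by_cases h1 : i + 1 ≤ n
    · have he1 : c i = c0 i := by rw [hcdef]; simp only [dif_pos (by omega : i < n)]
      have he2 : c (i + 1) = c0 (i + 1) := by
        by_cases h2 : i + 1 < n
        · rw [hcdef]; simp only [dif_pos h2]
        · have hin : i + 1 = n := by omega
          have : c (i + 1) = x' 0 := by
            rw [hcdef]
            simp only [dif_neg (by omega : ¬ i + 1 < n)]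
            exact congrArg x' (Fin.ext (by simp; omega))
          rw [this, hin, hc0n]
      rw [he1, he2]
      exact hc0s i (by omega)
    · have he1 : c i = x' ⟨i - n, by omega⟩ := by
        have := hcx' (i - n) (by omega)
        rw [show n + (i - n) = i by omega] at this
        exact this
      have he2 : c (i + 1) = x' ⟨i - n + 1, by omega⟩ := by
        have := hcx' (i - n + 1) (by omega)
        rw [show n + (i - n + 1) = i + 1 by omega] at this
        exact this
      rw [he1, he2]
      exact hsx' (i - n) (by omega)
  obtain ⟨w', hrw', hpow, hform⟩ :=
    followPath hP hπ0 hπinv hY hQ c (n + k') hsteps (by rw [hc0]; exact hru)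
  have hw'v : w' = v := by
    funext i
    rw [hform i (by omega)]
    have : (i : ℕ) + (n + k') - k' = n + (i : ℕ) := by omega
    rw [this, hcx' (i : ℕ) (by omega)]
    rw [show (⟨(i : ℕ), by omega⟩ : Fin (k' + 1)) = i from Fin.ext rfl]
    exact hgx' i
  exact ⟨n + k', hw'v ▸ hpow⟩

lemma reach_S (hP : (∀ i j, 0 ≤ P i j) ∧ ∀ i, ∑ j, P i j = 1) (hπ0 : ∀ x, 0 ≤ π x)
    (hY : 0 < Fintype.card Y)
    (hQ : ∀ w z, Q w z = if 0 < wordDist' P π g w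
      then wordDist' P π g (Fin.snoc w z) / wordDist' P π g w
      else 1 / (Fintype.card Y : ℝ))
    {u : Fin (k'+1) → Y} (hu : 0 < wordDist' P π g u) (s : Fin (k'+1) → Y) :
    ∃ (n : ℕ) (v : Fin (k'+1) → Y), 0 < wordDist' P π g v ∧
      0 < matPow (doobLift Q (k'.succ_pos)) n s v := by
  have hM0 : ∀ v v', 0 ≤ doobLift Q (k'.succ_pos) v v' :=
    M_nonneg (Q_nonneg hP.1 hπ0 hY hQ)
  set W : ℕ → Y := fun m => if h : m < k' + 1 then s ⟨m, h⟩
    else u ⟨min (m - (k' + 1)) k', by omega⟩ with hWdef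
  set V : ℕ → (Fin (k' + 1) → Y) := fun t i => W (t + (i : ℕ)) with hVdef
  have hV0 : V 0 = s := by
    funext i
    show W (0 + (i : ℕ)) = s i
    rw [hWdef]
    simp only [Nat.zero_add]
    rw [dif_pos i.isLt]
  have hVk : V (k' + 1) = u := by
    funext i
    show W (k' + 1 + (i : ℕ)) = u i
    rw [hWdef]
    simp only [dif_neg (by omega : ¬ k' + 1 + (i : ℕ) < k' + 1)]
    congr 1
    simp only [Fin.ext_iff]
    have : (i : ℕ) < k' + 1 := i.isLt
    omega
  have hex : ∃ t, 0 < wordDist' P π g (V t) := ⟨k' + 1, hVk ▸ hu⟩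
  classical
  set t0 := Nat.find hex with ht0
  have hVt0 : 0 < wordDist' P π g (V t0) := Nat.find_spec hex
  have hmin : ∀ j < t0, ¬ 0 < wordDist' P π g (V j) := fun j hj => Nat.find_min hex hj
  have hcompat : ∀ t, ∀ (i : Fin (k'+1)) (h : (i : ℕ) + 1 < k' + 1),
      V (t + 1) i = V t ⟨(i : ℕ) + 1, h⟩ := by
    intro t i h
    show W (t + 1 + (i : ℕ)) = W (t + ((i : ℕ) + 1))
    congr 1
    omega
  have hsteps : ∀ j < t0, 0 < doobLift Q (k'.succ_pos) (V j) (V (j + 1)) := by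
    intro j hj
    rw [doobLift_apply_eq _ _ (hcompat j)]
    exact Q_pos_uniform hY hQ (hmin j hj) _
  have := path_pow_pos hM0 V t0 hsteps
  rw [hV0] at this
  exact ⟨t0, V t0, hVt0, this⟩

end Lift3

section Final
variable {X Y : Type*} [Fintype X] [Fintype Y] {P : Matrix X X ℝ} {π : X → ℝ} {g : X → Y}
  {k' : ℕ} {Q : (Fin (k' + 1) → Y) → Y → ℝ}

lemma cons_last (z0 : Y) (w : Fin (k' + 1) → Y) :
    (Fin.cons z0 w : Fin (k' + 2) → Y) (Fin.last (k' + 1)) = w (Fin.last k') := by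
  rw [← Fin.succ_last, Fin.cons_succ]

lemma snoc_front (v : Fin (k' + 2) → Y) :
    Fin.snoc (front v) (v (Fin.last (k' + 1))) = v := Fin.snoc_init_self v

lemma snoc_eq_cons_shiftW (w : Fin (k' + 1) → Y) (z : Y) :
    (Fin.snoc w z : Fin (k' + 2) → Y) = Fin.cons (w 0) (shiftW w z) := by
  funext j
  refine Fin.cases ?_ ?_ j
  · rw [Fin.cons_zero, show (0 : Fin (k' + 2)) = Fin.castSucc 0 from rfl, Fin.snoc_castSucc]
  · intro i
    rw [Fin.cons_succ, shiftW]
    split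
    · next h =>
      rw [show i.succ = Fin.castSucc ⟨(i : ℕ) + 1, h⟩ from Fin.ext (by simp), Fin.snoc_castSucc]
    · next h =>
      rw [show i.succ = Fin.last (k' + 1) from Fin.ext (by simp; omega), Fin.snoc_last]

lemma front_cons_compat (z0 : Y) (w' : Fin (k' + 1) → Y) :
    ∀ (i : Fin (k' + 1)) (h : (i : ℕ) + 1 < k' + 1),
      w' i = front (Fin.cons z0 w') ⟨(i : ℕ) + 1, h⟩ := by
  intro i h
  show w' i = (Fin.cons z0 w' : Fin (k' + 2) → Y) (Fin.castSucc ⟨(i : ℕ) + 1, h⟩)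
  rw [show Fin.castSucc ⟨(i : ℕ) + 1, h⟩ = Fin.succ ⟨(i : ℕ), by omega⟩ from Fin.ext (by simp),
    Fin.cons_succ]

lemma front_cons_zero (z0 : Y) (w' : Fin (k' + 1) → Y) :
    front (Fin.cons z0 w') 0 = z0 := by
  show (Fin.cons z0 w' : Fin (k' + 2) → Y) (Fin.castSucc 0) = z0
  rw [Fin.castSucc_zero, Fin.cons_zero]

lemma eq_front_cons {w w' : Fin (k' + 1) → Y}
    (h : ∀ (i : Fin (k' + 1)) (hi : (i : ℕ) + 1 < k' + 1), w' i = w ⟨(i : ℕ) + 1, hi⟩) :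
    w = front (Fin.cons (w 0) w') := by
  funext i
  rcases Nat.eq_zero_or_pos (i : ℕ) with h0 | hpos
  · rw [show i = 0 from Fin.ext h0, front_cons_zero]
  · have hlt : (i : ℕ) - 1 + 1 < k' + 1 := by have := i.isLt; omega
    have : front (Fin.cons (w 0) w') i =
        (Fin.cons (w 0) w' : Fin (k' + 2) → Y) (Fin.succ ⟨(i : ℕ) - 1, by omega⟩) := by
      show (Fin.cons (w 0) w' : Fin (k' + 2) → Y) _ = _
      exact congrArg _ (Fin.ext (by simp; omega))
    rw [this, Fin.cons_succ]
    have := h ⟨(i : ℕ) - 1, by omega⟩ hlt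
    rw [this]
    exact congrArg w (Fin.ext (by simp; omega))

lemma front_cons_last (z0 : Y) (w' : Fin (k' + 1) → Y) :
    (Fin.cons z0 w' : Fin (k' + 2) → Y) (Fin.last (k' + 1)) = w' ⟨k', by omega⟩ := by
  rw [cons_last]
  rfl

/-- the bridge: `k`-th order invariance is invariance for the Doob lift -/
lemma bridge (μ : (Fin (k' + 1) → Y) → ℝ) (w' : Fin (k' + 1) → Y) :
    ∑ w, μ w * doobLift Q (k'.succ_pos) w w' =
      ∑ z0, μ (front (Fin.cons z0 w')) *
        Q (front (Fin.cons z0 w'))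
          ((Fin.cons z0 w' : Fin (k' + 2) → Y) (Fin.last (k' + 1))) := by
  have hinj : ∀ z1 z2 : Y, front (Fin.cons z1 w') = front (Fin.cons z2 w') → z1 = z2 := by
    intro z1 z2 h
    have := congrFun h 0
    rwa [front_cons_zero, front_cons_zero] at this
  have h1 : ∑ w ∈ Finset.image (fun z0 => front (Fin.cons z0 w')) Finset.univ,
      μ w * doobLift Q (k'.succ_pos) w w' = ∑ w, μ w * doobLift Q (k'.succ_pos) w w' := by
    refine Finset.sum_subset (Finset.subset_univ _) ?_
    intro w _ hnm
    by_cases hc : ∀ (i : Fin (k'+1)) (h : (i : ℕ) + 1 < k' + 1), w' i = w ⟨(i : ℕ) + 1, h⟩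
    · exfalso
      exact hnm (by
        rw [eq_front_cons hc]
        exact Finset.mem_image_of_mem _ (Finset.mem_univ _))
    · rw [doobLift_apply_ne _ _ hc, mul_zero]
  rw [← h1, Finset.sum_image (fun z1 _ z2 _ h => hinj z1 z2 h)]
  refine Finset.sum_congr rfl fun z0 _ => ?_
  rw [doobLift_apply_eq _ _ (fun i h => front_cons_compat z0 w' i h), front_cons_last]

end Final

section Final2
variable {X Y : Type*} [Fintype X] [Fintype Y] {P : Matrix X X ℝ} {π : X → ℝ} {g : X → Y}
  {k' : ℕ} {Q : (Fin (k' + 1) → Y) → Y → ℝ}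

/-- the word distribution is invariant for `Q` -/
lemma p_invariant (hP : (∀ i j, 0 ≤ P i j) ∧ ∀ i, ∑ j, P i j = 1) (hπ0 : ∀ x, 0 ≤ π x)
    (hπinv : ∀ j, ∑ i, π i * P i j = π j)
    (hQ : ∀ w z, Q w z = if 0 < wordDist' P π g w
      then wordDist' P π g (Fin.snoc w z) / wordDist' P π g w
      else 1 / (Fintype.card Y : ℝ))
    (w : Fin (k' + 1) → Y) :
    wordDist' P π g w = ∑ z0, wordDist' P π g (front (Fin.cons z0 w)) *
      Q (front (Fin.cons z0 w))
        ((Fin.cons z0 w : Fin (k' + 2) → Y) (Fin.last (k' + 1))) := by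
  have key : ∀ z0 : Y, wordDist' P π g (front (Fin.cons z0 w)) *
      Q (front (Fin.cons z0 w))
        ((Fin.cons z0 w : Fin (k' + 2) → Y) (Fin.last (k' + 1)))
      = wordDist' P π g (Fin.cons z0 w) := by
    intro z0
    by_cases hpos : 0 < wordDist' P π g (front (Fin.cons z0 w))
    · rw [hQ, if_pos hpos, mul_div_cancel₀ _ (ne_of_gt hpos), snoc_front]
    · have hu0 : wordDist' P π g (front (Fin.cons z0 w)) = 0 :=
        le_antisymm (not_lt.mp hpos) (wordDist'_nonneg g hP.1 hπ0 _)
      have hall : ∀ z, wordDist' P π g (Fin.snoc (front (Fin.cons z0 w)) z) = 0 := by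
        have hsum : ∑ z, wordDist' P π g (Fin.snoc (front (Fin.cons z0 w)) z) = 0 := by
          rw [marg_snoc g hP, hu0]
        intro z
        exact (Finset.sum_eq_zero_iff_of_nonneg
          (fun z _ => wordDist'_nonneg g hP.1 hπ0 _)).mp hsum z (Finset.mem_univ z)
      rw [hu0, zero_mul, ← snoc_front (Fin.cons z0 w)]
      exact (hall _).symm
  calc wordDist' P π g w = ∑ z0, wordDist' P π g (Fin.cons z0 w) :=
        (marg_cons g hP hπinv w).symm
    _ = _ := (Finset.sum_congr rfl fun z0 _ => (key z0).symm)

/-- the support of the word distribution is closed for the Doob lift -/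
lemma S_closed (hP : (∀ i j, 0 ≤ P i j) ∧ ∀ i, ∑ j, P i j = 1) (hπ0 : ∀ x, 0 ≤ π x)
    (hπinv : ∀ j, ∑ i, π i * P i j = π j)
    (hQ : ∀ w z, Q w z = if 0 < wordDist' P π g w
      then wordDist' P π g (Fin.snoc w z) / wordDist' P π g w
      else 1 / (Fintype.card Y : ℝ))
    {w w'' : Fin (k' + 1) → Y} (hw : 0 < wordDist' P π g w)
    (hstep : 0 < doobLift Q (k'.succ_pos) w w'') : 0 < wordDist' P π g w'' := by
  by_cases hc : ∀ (i : Fin (k'+1)) (h : (i : ℕ) + 1 < k' + 1), w'' i = w ⟨(i : ℕ) + 1, h⟩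
  · obtain ⟨z, hz⟩ : ∃ z, w'' = shiftW w z := ⟨_, compat_shiftW hc⟩
    rw [hz, doobLift_shiftW, hQ, if_pos hw] at hstep
    have hA : 0 < wordDist' P π g (Fin.snoc w z) := by
      rcases div_pos_iff.mp hstep with ⟨h1, _⟩ | ⟨_, h2⟩
      · exact h1
      · linarith
    rw [snoc_eq_cons_shiftW] at hA
    have hle : wordDist' P π g (Fin.cons (w 0) (shiftW w z))
        ≤ ∑ z0, wordDist' P π g (Fin.cons z0 (shiftW w z)) :=
      Finset.single_le_sum (f := fun z0 => wordDist' P π g (Fin.cons z0 (shiftW w z)))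
        (fun z0 _ => wordDist'_nonneg g hP.1 hπ0 _) (Finset.mem_univ (w 0))
    rw [marg_cons g hP hπinv] at hle
    rw [hz]
    linarith
  · rw [doobLift_apply_ne _ _ hc] at hstep
    exact absurd hstep (lt_irrefl 0)

end Final2


/-- If `X` is a stationary Markov chain with a single recurrent class and
invariant distribset_option maxHeartbeats 1000000 in
ution `π`, `g : X → Y`, and `Q` is the `k`-th order Markov approximation of
the lumped process `Y = g(X)`, then `Q` has a unique invariant distribution on `Y^k`,
namely the `k`-block distribution `p_k` of `g(X)`. -/
theorem unique_invariant_of_lumping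
    {X Y : Type*} [Fintype X] [Fintype Y]
    (P : Matrix X X ℝ) (hP : IsStochastic P) (hrec : SingleRecurrentClass P)
    (π : X → ℝ) (hπ : IsProbDist π) (hπinv : ∀ j, ∑ i, π i * P i j = π j)
    (hY : 1 < Fintype.card Y) (g : X → Y)
    (k : ℕ) (hk : 1 ≤ k)
    (Q : (Fin k → Y) → Y → ℝ)
    (hQ : ∀ (w : Fin k → Y) (z : Y), Q w z =
      if 0 < wordDist P π g w then wordDist P π g (Fin.snoc w z) / wordDist P π g w
      else 1 / (Fintype.card Y : ℝ)) :
    (∃! μ : (Fin k → Y) → ℝ, IsInvariantFor μ Q) ∧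
      ∀ μ : (Fin k → Y) → ℝ, IsInvariantFor μ Q → μ = fun w => wordDist P π g w := by
  obtain ⟨k', rfl⟩ : ∃ k'', k = k'' + 1 := ⟨k - 1, by omega⟩
  have hPs : (∀ i j, 0 ≤ P i j) ∧ ∀ i, ∑ j, P i j = 1 := hP
  have hrec' : (∃ i, Recurrent P i) ∧
      ∀ i j, Recurrent P i → Recurrent P j → Accessible P i j := hrec
  have hπ0 : ∀ x, 0 ≤ π x := hπ.1
  have hπ1 : ∑ a, π a = 1 := hπ.2
  have hY0 : 0 < Fintype.card Y := by omega
  have hQ' : ∀ (w : Fin (k' + 1) → Y) (z : Y), Q w z =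
      if 0 < wordDist' P π g w then wordDist' P π g (Fin.snoc w z) / wordDist' P π g w
      else 1 / (Fintype.card Y : ℝ) := hQ
  have hQ0 := Q_nonneg hPs.1 hπ0 hY0 hQ'
  have hQrow := Q_row hPs hπ0 hY0 hQ'
  have hM : (∀ w w', 0 ≤ doobLift Q (k'.succ_pos) w w') ∧
      (∀ w, ∑ w', doobLift Q (k'.succ_pos) w w' = 1) := ⟨M_nonneg hQ0, M_row hQrow⟩
  have hpProb : IsProbDist (fun w : Fin (k' + 1) → Y => wordDist' P π g w) :=
    ⟨fun w => wordDist'_nonneg g hPs.1 hπ0 w, wordDist'_total g hPs hπ1 k'⟩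
  have hpInv : IsInvariantFor (fun w : Fin (k' + 1) → Y => wordDist' P π g w) Q :=
    ⟨hpProb, fun w => p_invariant hPs hπ0 hπinv hQ' w⟩
  have hpM : ∀ w', ∑ w, wordDist' P π g w * doobLift Q (k'.succ_pos) w w'
      = wordDist' P π g w' := by
    intro w'
    rw [bridge _ w']
    exact (p_invariant hPs hπ0 hπinv hQ' w').symm
  have huniq : ∀ μ : (Fin (k' + 1) → Y) → ℝ, IsInvariantFor μ Q →
      μ = fun w => wordDist' P π g w := by
    intro μ hμ
    obtain ⟨⟨hμ0, hμ1⟩, hμeq⟩ := hμ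
    have hμM : ∀ w', ∑ w, μ w * doobLift Q (k'.succ_pos) w w' = μ w' := by
      intro w'
      rw [bridge μ w']
      exact (hμeq w').symm
    have huex : ∃ u : Fin (k' + 1) → Y, 0 < wordDist' P π g u := by
      by_contra hno
      push_neg at hno
      have h1 : ∑ y : Fin (k' + 1) → Y, wordDist' P π g y ≤ 0 :=
        Finset.sum_nonpos fun y _ => hno y
      rw [wordDist'_total g hPs hπ1 k'] at h1
      linarith
    obtain ⟨u, hu⟩ := huex
    classical
    set Sfin : Finset (Fin (k' + 1) → Y) :=
      univ.filter (fun w => 0 < wordDist' P π g w) with hSfin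
    have hmemS : ∀ w, w ∈ Sfin ↔ 0 < wordDist' P π g w := by
      intro w; simp [hSfin]
    have hnotS : ∀ w, w ∉ Sfin → wordDist' P π g w = 0 := by
      intro w hw
      have h1 := wordDist'_nonneg g hPs.1 hπ0 w
      rcases lt_or_eq_of_le h1 with h | h
      · exact absurd ((hmemS w).mpr h) hw
      · exact h.symm
    have hScl : ∀ w ∈ Sfin, ∀ w'', 0 < doobLift Q (k'.succ_pos) w w'' → w'' ∈ Sfin := by
      intro w hw w'' hstep
      exact (hmemS _).mpr (S_closed hPs hπ0 hπinv hQ' ((hmemS _).mp hw) hstep)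
    have habs : ∀ w ∉ Sfin, μ w = 0 := by
      refine absorption hM hμ0 hμM Sfin hScl ?_
      intro s hs hμs
      obtain ⟨n, v, hv, hpow⟩ := reach_S hPs hπ0 hY0 hQ' hu s
      refine ⟨n, lt_of_lt_of_le hpow ?_⟩
      exact Finset.single_le_sum (f := fun a => matPow (doobLift Q (k'.succ_pos)) n s a)
        (fun a _ => pow_entry_nonneg hM.1 n s a) ((hmemS v).mpr hv)
    obtain ⟨w0, hw0S, hw0min⟩ :=
      Sfin.exists_min_image (fun w => μ w / wordDist' P π g w) ⟨u, (hmemS u).mpr hu⟩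
    have hpw0 : 0 < wordDist' P π g w0 := (hmemS w0).mp hw0S
    set cc := μ w0 / wordDist' P π g w0 with hcc
    set ν : (Fin (k' + 1) → Y) → ℝ := fun w => μ w - cc * wordDist' P π g w with hν
    have hν0 : ∀ w, 0 ≤ ν w := by
      intro w
      by_cases hwS : w ∈ Sfin
      · have hpw : 0 < wordDist' P π g w := (hmemS w).mp hwS
        have h2 : cc * wordDist' P π g w ≤ μ w := by
          have h3 := mul_le_mul_of_nonneg_right (hw0min w hwS) (le_of_lt hpw)
          rwa [div_mul_cancel₀ _ (ne_of_gt hpw)] at h3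
        simp only [hν]
        linarith
      · simp only [hν, habs w hwS, hnotS w hwS]
        simp
    have hνinv : ∀ j, ∑ i, ν i * doobLift Q (k'.succ_pos) i j = ν j := by
      intro j
      simp only [hν, sub_mul, mul_assoc]
      rw [Finset.sum_sub_distrib, ← Finset.mul_sum, hμM j, hpM j]
    have hw0ν : ν w0 = 0 := by
      simp only [hν, hcc]
      rw [div_mul_cancel₀ _ (ne_of_gt hpw0)]
      ring
    have hνall : ∀ w, ν w = 0 := by
      intro w
      by_cases hwS : w ∈ Sfin
      · exact min_principle hM.1 hν0 hνinv hw0ν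
          (mutual_access hPs hrec' hπ0 hπinv hY0 hQ' ((hmemS w).mp hwS) hpw0)
      · simp only [hν, habs w hwS, hnotS w hwS]
        simp
    have hsum : ∑ w, ν w = 0 := Finset.sum_eq_zero fun w _ => hνall w
    have hcc1 : cc = 1 := by
      simp only [hν] at hsum
      rw [Finset.sum_sub_distrib, ← Finset.mul_sum, hμ1, wordDist'_total g hPs hπ1 k'] at hsum
      linarith
    funext w
    have h4 := hνall w
    simp only [hν, hcc1, one_mul] at h4
    linarith
  exact ⟨⟨fun w => wordDist' P π g w, hpInv, fun μ hμ => huniq μ hμ⟩,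
    fun μ hμ => huniq μ hμ⟩
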